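/- Let P = {P_1, ..., P_m} ⊂ ℤ[y_1, ..., y_n] be an independent family of polynomials. There exist C', β > 0 such that for any finite commutative ring R with characteristic N satisfying lpf(N) > C' and any subsets A_0, ..., A_m ⊆ R, the number of pairs (x, y) ∈ R × R^n such that (x, x+P_1(y), ..., x+P_m(y)) ∈ A_0 × A_1 × ⋯ × A_m and the set {x, x+P_1(y), ..., x+P_m(y)} has cardinality strictly less than m+1 is at most |R|^{n+1} · lpf(N)^{−β}. -/

import Mathlib

open scoped BigOperators Classical

/-- A family of integer polynomials in `n` variables is *independent* if the only integer
linear combination of them that is a constant polynomial is the trivial one. -/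
def IndepFamily {n m : ℕ} (P : Fin m → MvPolynomial (Fin n) ℤ) : Prop :=
  ∀ c : Fin m → ℤ,
    (∃ a : ℤ, ∑ i, MvPolynomial.C (c i) * P i = MvPolynomial.C a) → ∀ i, c i = 0

open Finset MvPolynomial


universe u

lemma sz_aux : ∀ (n : ℕ) (F : Type u) (_ : Field F) (_ : Fintype F)
    (Q : MvPolynomial (Fin n) F), Q ≠ 0 →
    (Finset.univ.filter fun y : Fin n → F => MvPolynomial.eval y Q = 0).card * Fintype.card F
      ≤ Q.totalDegree * Fintype.card F ^ n := by
  intro n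
  induction n with
  | zero =>
    intro F _ _ Q hQ
    have : (Finset.univ.filter fun y : Fin 0 → F => MvPolynomial.eval y Q = 0) = ∅ := by
      rw [Finset.eq_empty_iff_forall_notMem]
      intro y hy
      rw [Finset.mem_filter] at hy
      rw [Q.eq_C_of_isEmpty] at hy hQ
      simp only [eval_C] at hy
      exact hQ (by rw [hy.2, map_zero])
    rw [this]; simp
  | succ n ih =>
    intro F _ _ Q hQ
    set q : Polynomial (MvPolynomial (Fin n) F) := finSuccEquiv F n Q with hq
    have hq0 : q ≠ 0 := by
      simpa [hq] using (map_ne_zero_iff _ (finSuccEquiv F n).injective).2 hQ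
    set k := q.natDegree with hk
    set c := q.coeff k with hc
    have hc0 : c ≠ 0 := by
      exact Polynomial.leadingCoeff_ne_zero.mpr hq0
    have hdeg : c.totalDegree + k ≤ Q.totalDegree :=
      totalDegree_coeff_finSuccEquiv_add_le Q k hc0
    -- reindex roots via (a, s) ↦ Fin.cons a s
    have hcard : (Finset.univ.filter fun y : Fin (n+1) → F => MvPolynomial.eval y Q = 0).card
        = (Finset.univ.filter fun p : F × (Fin n → F) =>
            MvPolynomial.eval (Fin.cons p.1 p.2) Q = 0).card := by
      refine Finset.card_bij' (fun y _ => (y 0, Fin.tail y)) (fun p _ => Fin.cons p.1 p.2)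
        ?_ ?_ ?_ ?_
      · intro y hy
        simp only [Finset.mem_filter, Finset.mem_univ, true_and] at hy ⊢
        rwa [Fin.cons_self_tail]
      · intro p hp
        simp only [Finset.mem_filter, Finset.mem_univ, true_and] at hp ⊢
        exact hp
      · intro y _; exact Fin.cons_self_tail y
      · intro p _; simp
    -- fiberwise count over the second coordinate
    have hsum : (Finset.univ.filter fun p : F × (Fin n → F) =>
          MvPolynomial.eval (Fin.cons p.1 p.2) Q = 0).card
        = ∑ s : Fin n → F,
            (Finset.univ.filter fun a : F => MvPolynomial.eval (Fin.cons a s) Q = 0).card := by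
      rw [Finset.card_eq_sum_card_fiberwise (f := Prod.snd) (t := Finset.univ)
        (fun p _ => Finset.mem_univ _)]
      refine Finset.sum_congr rfl fun s _ => ?_
      refine Finset.card_bij' (fun p _ => p.1) (fun a _ => (a, s)) ?_ ?_ ?_ ?_
      · intro p hp
        simp only [Finset.mem_filter, Finset.mem_univ, true_and] at hp ⊢
        rw [← hp.2]; exact hp.1
      · intro a ha
        simp only [Finset.mem_filter, Finset.mem_univ, true_and] at ha ⊢
        exact ⟨ha, trivial⟩
      · intro p hp
        simp only [Finset.mem_filter, Finset.mem_univ, true_and] at hp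
        exact Prod.ext rfl hp.2.symm
      · intro a _; rfl
    -- bound each fiber
    have hfiber1 : ∀ s : Fin n → F, MvPolynomial.eval s c ≠ 0 →
        (Finset.univ.filter fun a : F => MvPolynomial.eval (Fin.cons a s) Q = 0).card ≤ k := by
      intro s hs
      have hp0 : q.map (MvPolynomial.eval s) ≠ 0 := by
        intro h
        apply hs
        have := Polynomial.coeff_map (MvPolynomial.eval s) k (p := q)
        rw [h] at this
        simpa [hc] using this.symm
      calc (Finset.univ.filter fun a : F => MvPolynomial.eval (Fin.cons a s) Q = 0).card
          ≤ (q.map (MvPolynomial.eval s)).roots.toFinset.card := by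
            apply Finset.card_le_card
            intro a ha
            simp only [Finset.mem_filter, Finset.mem_univ, true_and] at ha
            rw [Multiset.mem_toFinset, Polynomial.mem_roots hp0]
            rw [eval_eq_eval_mv_eval'] at ha
            exact ha
        _ ≤ Multiset.card (q.map (MvPolynomial.eval s)).roots := Multiset.toFinset_card_le _
        _ ≤ (q.map (MvPolynomial.eval s)).natDegree := Polynomial.card_roots' _
        _ ≤ k := Polynomial.natDegree_map_le
    have hfiber2 : ∀ s : Fin n → F,
        (Finset.univ.filter fun a : F => MvPolynomial.eval (Fin.cons a s) Q = 0).card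
          ≤ Fintype.card F := fun s => (Finset.card_filter_le _ _).trans_eq (Finset.card_univ)
    -- split the sum
    set B := (Finset.univ.filter fun s : Fin n → F => MvPolynomial.eval s c = 0) with hB
    have hsplit : ∑ s : Fin n → F,
          (Finset.univ.filter fun a : F => MvPolynomial.eval (Fin.cons a s) Q = 0).card
        ≤ B.card * Fintype.card F + Fintype.card F ^ n * k := by
      rw [← Finset.sum_filter_add_sum_filter_not Finset.univ
        (fun s : Fin n → F => MvPolynomial.eval s c = 0)]
      gcongr
      · calc ∑ s ∈ B, (Finset.univ.filter
              fun a : F => MvPolynomial.eval (Fin.cons a s) Q = 0).card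
            ≤ ∑ _s ∈ B, Fintype.card F := Finset.sum_le_sum fun s _ => hfiber2 s
          _ = B.card * Fintype.card F := by rw [Finset.sum_const, smul_eq_mul]
      · calc ∑ s ∈ Finset.univ.filter (fun s : Fin n → F => ¬ MvPolynomial.eval s c = 0),
              (Finset.univ.filter fun a : F => MvPolynomial.eval (Fin.cons a s) Q = 0).card
            ≤ ∑ s ∈ Finset.univ.filter (fun s : Fin n → F => ¬ MvPolynomial.eval s c = 0), k := by
              refine Finset.sum_le_sum fun s hs => hfiber1 s ?_
              simpa using (Finset.mem_filter.mp hs).2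
          _ ≤ Fintype.card F ^ n * k := by
              rw [Finset.sum_const, smul_eq_mul]
              have : (Finset.univ.filter
                  (fun s : Fin n → F => ¬ MvPolynomial.eval s c = 0)).card
                  ≤ Fintype.card F ^ n := by
                refine (Finset.card_filter_le _ _).trans_eq ?_
                rw [Finset.card_univ, Fintype.card_fun]
                simp
              exact Nat.mul_le_mul_right _ this
    have hIH : B.card * Fintype.card F ≤ c.totalDegree * Fintype.card F ^ n := ih F _ _ c hc0
    -- put everything together
    rw [hcard]
    calc (Finset.univ.filter fun p : F × (Fin n → F) =>
            MvPolynomial.eval (Fin.cons p.1 p.2) Q = 0).card * Fintype.card F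
        ≤ (B.card * Fintype.card F + Fintype.card F ^ n * k) * Fintype.card F := by
          rw [hsum]; exact Nat.mul_le_mul_right _ hsplit
      _ = (B.card * Fintype.card F) * Fintype.card F
            + k * (Fintype.card F ^ n * Fintype.card F) := by ring
      _ ≤ (c.totalDegree * Fintype.card F ^ n) * Fintype.card F
            + k * (Fintype.card F ^ n * Fintype.card F) := by gcongr
      _ = (c.totalDegree + k) * Fintype.card F ^ (n + 1) := by ring
      _ ≤ Q.totalDegree * Fintype.card F ^ (n + 1) := Nat.mul_le_mul_right _ hdeg

set_option maxHeartbeats 1000000 in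
lemma root_count_surj (n : ℕ) (R : Type*) (F : Type*) [CommRing R] [Fintype R]
    [Field F] [Fintype F] (π : R →+* F) (hsurj : Function.Surjective π)
    (Q : MvPolynomial (Fin n) ℤ) (s : Fin n →₀ ℕ) (ha : Q.coeff s ≠ 0)
    (hq : (Q.coeff s).natAbs < Nat.minFac (ringChar R)) :
    (Finset.univ.filter fun y : Fin n → R => MvPolynomial.aeval y Q = 0).card
        * Nat.minFac (ringChar R)
      ≤ Q.totalDegree * Fintype.card R ^ n := by
  set K := Finset.univ.filter fun r : R => π r = 0 with hK
  have hfib : ∀ b : F, (Finset.univ.filter fun r : R => π r = b).card = K.card := by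
    intro b
    obtain ⟨b0, rfl⟩ := hsurj b
    refine Finset.card_bij' (fun r _ => r - b0) (fun x _ => b0 + x) ?_ ?_ ?_ ?_
    · intro r hr
      simp only [Finset.mem_filter, Finset.mem_univ, true_and, hK] at hr ⊢
      rw [map_sub, hr, sub_self]
    · intro x hx
      simp only [Finset.mem_filter, Finset.mem_univ, true_and, hK] at hx ⊢
      rw [map_add, hx, add_zero]
    · intro r _; ring
    · intro x _; ring
  have hRcard : Fintype.card R = Fintype.card F * K.card := by
    rw [← Finset.card_univ (α := R),
      Finset.card_eq_sum_card_fiberwise (f := π) (t := Finset.univ) (fun r _ => Finset.mem_univ _)]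
    rw [Finset.sum_congr rfl fun b _ => hfib b, Finset.sum_const, Finset.card_univ, smul_eq_mul]
  set p := ringChar F with hp
  have hpp : p.Prime := CharP.char_is_prime F p
  have hpd : p ∣ ringChar R := by
    apply ringChar.dvd
    calc ((ringChar R : ℕ) : F) = π ((ringChar R : ℕ) : R) := (map_natCast π _).symm
      _ = π 0 := by rw [(ringChar.spec R (ringChar R)).mpr dvd_rfl]
      _ = 0 := map_zero π
  have hmf : Nat.minFac (ringChar R) ≤ p := Nat.minFac_le_of_dvd hpp.two_le hpd
  have hpF : p ≤ Fintype.card F := by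
    obtain ⟨k, -, hcard⟩ := FiniteField.card F p
    rw [hcard]
    exact Nat.le_self_pow k.ne_zero p
  -- the reduced polynomial is nonzero
  set Qb : MvPolynomial (Fin n) F := MvPolynomial.map (Int.castRingHom F) Q with hQb
  have hQb0 : Qb ≠ 0 := by
    intro h
    have hcoeff : Qb.coeff s = ((Q.coeff s : ℤ) : F) := MvPolynomial.coeff_map _ _ _
    rw [h, MvPolynomial.coeff_zero] at hcoeff
    have hdvd : (p : ℤ) ∣ Q.coeff s := (CharP.intCast_eq_zero_iff F p _).mp hcoeff.symm
    refine ha (Int.eq_zero_of_abs_lt_dvd hdvd ?_)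
    rw [Int.abs_eq_natAbs]
    exact_mod_cast lt_of_lt_of_le hq hmf
  have hdegb : Qb.totalDegree ≤ Q.totalDegree := by
    unfold MvPolynomial.totalDegree
    exact Finset.sup_mono (MvPolynomial.support_map_subset _ _)
  set rootsF := Finset.univ.filter fun t : Fin n → F => MvPolynomial.eval t Qb = 0 with hrF
  set rootsR := Finset.univ.filter fun y : Fin n → R => MvPolynomial.aeval y Q = 0 with hrR
  have hmap : ∀ y : Fin n → R, π (MvPolynomial.aeval y Q) = MvPolynomial.eval (π ∘ y) Qb := by
    intro y
    rw [hQb, MvPolynomial.eval_map, MvPolynomial.aeval_def, algebraMap_int_eq,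
      MvPolynomial.eval₂_comp_left π]
    congr 1
    exact Subsingleton.elim _ _
  have hfibn : ∀ t : Fin n → F,
      (rootsR.filter fun y : Fin n → R => π ∘ y = t).card ≤ K.card ^ n := by
    intro t
    calc (rootsR.filter fun y : Fin n → R => π ∘ y = t).card
        ≤ (Finset.univ.filter fun y : Fin n → R => π ∘ y = t).card := by
          apply Finset.card_le_card
          intro y hy
          simp only [Finset.mem_filter, Finset.mem_univ, true_and] at hy ⊢
          exact hy.2
      _ = (Fintype.piFinset fun i => Finset.univ.filter fun r : R => π r = t i).card := by
          congr 1
          ext y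
          simp [funext_iff, Fintype.mem_piFinset]
      _ = ∏ i : Fin n, (Finset.univ.filter fun r : R => π r = t i).card :=
          Fintype.card_piFinset _
      _ = K.card ^ n := by
          rw [Finset.prod_congr rfl fun i _ => hfib (t i)]
          simp
  have himg : rootsR.image (fun y => π ∘ y) ⊆ rootsF := by
    intro t ht
    obtain ⟨y, hy, rfl⟩ := Finset.mem_image.mp ht
    simp only [hrR, hrF, Finset.mem_filter, Finset.mem_univ, true_and] at hy ⊢
    rw [← hmap, hy, map_zero]
  have hcount : rootsR.card ≤ K.card ^ n * rootsF.card := by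
    calc rootsR.card ≤ K.card ^ n * (rootsR.image (fun y => π ∘ y)).card :=
          Finset.card_le_mul_card_image _ _ (fun t _ => hfibn t)
      _ ≤ K.card ^ n * rootsF.card :=
          Nat.mul_le_mul_left _ (Finset.card_le_card himg)
  have hSZ := sz_aux n F ‹Field F› ‹Fintype F› Qb hQb0
  calc rootsR.card * Nat.minFac (ringChar R)
      ≤ (K.card ^ n * rootsF.card) * Nat.minFac (ringChar R) :=
        Nat.mul_le_mul_right _ hcount
    _ ≤ (K.card ^ n * rootsF.card) * Fintype.card F :=
        Nat.mul_le_mul_left _ (hmf.trans hpF)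
    _ = K.card ^ n * (rootsF.card * Fintype.card F) := by ring
    _ ≤ K.card ^ n * (Qb.totalDegree * Fintype.card F ^ n) :=
        Nat.mul_le_mul_left _ hSZ
    _ ≤ K.card ^ n * (Q.totalDegree * Fintype.card F ^ n) := by
        exact Nat.mul_le_mul_left _ (Nat.mul_le_mul_right _ hdegb)
    _ = Q.totalDegree * (Fintype.card F * K.card) ^ n := by ring
    _ = Q.totalDegree * Fintype.card R ^ n := by rw [← hRcard]

lemma root_count_ring (n : ℕ) (R : Type*) [CommRing R] [Fintype R] [Nontrivial R]
    (Q : MvPolynomial (Fin n) ℤ) (s : Fin n →₀ ℕ) (ha : Q.coeff s ≠ 0)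
    (hq : (Q.coeff s).natAbs < Nat.minFac (ringChar R)) :
    (Finset.univ.filter fun y : Fin n → R => MvPolynomial.aeval y Q = 0).card
        * Nat.minFac (ringChar R)
      ≤ Q.totalDegree * Fintype.card R ^ n := by
  obtain ⟨I, hI⟩ := Ideal.exists_maximal R
  haveI := hI
  haveI : Finite (R ⧸ I) := Quotient.finite _
  letI : Fintype (R ⧸ I) := Fintype.ofFinite _
  letI : Field (R ⧸ I) := Ideal.Quotient.field I
  exact root_count_surj n R (R ⧸ I) (Ideal.Quotient.mk I) Ideal.Quotient.mk_surjective
    Q s ha hq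

lemma collision_of_card_lt {m : ℕ} {R : Type*} [CommRing R] (x : R) (v : Fin m → R)
    (h : (insert x ((Finset.univ : Finset (Fin m)).image fun i => x + v i)).card < m + 1) :
    (∃ i, v i = 0) ∨ ∃ i j, i ≠ j ∧ v i = v j := by
  by_contra hcon
  push_neg at hcon
  obtain ⟨h1, h2⟩ := hcon
  have himg : ((Finset.univ : Finset (Fin m)).image fun i => x + v i).card = m := by
    rw [Finset.card_image_of_injOn, Finset.card_univ, Fintype.card_fin]
    intro i _ j _ hij
    by_contra hne
    exact h2 i j hne (add_left_cancel hij)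
  have hx : x ∉ ((Finset.univ : Finset (Fin m)).image fun i => x + v i) := by
    intro hx
    obtain ⟨i, _, hi⟩ := Finset.mem_image.mp hx
    exact h1 i (by rwa [add_eq_left] at hi)
  rw [Finset.card_insert_of_notMem hx, himg] at h
  exact lt_irrefl _ h

/-- **Proposition (bound on the number of degenerated configurations).** For an independent
family `P₁, …, Pₘ` there exist `C', β > 0` such that for any finite commutative ring `R` of
characteristic `N` with `lpf(N) > C'` and subsets `A₀, …, Aₘ ⊆ R`, the number of pairs
`(x,y)` giving a degenerated configuration `(x, x+P₁(y), …, x+Pₘ(y)) ∈ A₀ × ⋯ × Aₘ` is at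
most `|R|^{n+1}·lpf(N)^{−β}`. -/
theorem degenerated_configuration_count
    (n m : ℕ) (P : Fin m → MvPolynomial (Fin n) ℤ) (hP : IndepFamily P) :
    ∃ C' β : ℝ, 0 < C' ∧ 0 < β ∧
      ∀ (R : Type*) [CommRing R] [Fintype R] [Nontrivial R],
        C' < (Nat.minFac (ringChar R) : ℝ) →
        ∀ A : Fin (m + 1) → Finset R,
          ((Finset.univ.filter fun p : R × (Fin n → R) =>
              p.1 ∈ A 0 ∧
              (∀ i : Fin m, p.1 + MvPolynomial.aeval p.2 (P i) ∈ A i.succ) ∧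
              (insert p.1 ((Finset.univ : Finset (Fin m)).image
                  fun i => p.1 + MvPolynomial.aeval p.2 (P i))).card < m + 1).card : ℝ)
            ≤ (Fintype.card R : ℝ) ^ (n + 1) * (Nat.minFac (ringChar R) : ℝ) ^ (-β) := by
  classical
  set Qof : (Fin m ⊕ Fin m × Fin m) → MvPolynomial (Fin n) ℤ :=
    Sum.elim P (fun ij => P ij.1 - P ij.2) with hQof
  set OK : (Fin m ⊕ Fin m × Fin m) → Prop :=
    Sum.elim (fun _ => True) (fun ij => ij.1 ≠ ij.2) with hOK
  -- the relevant polynomials are nonzero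
  have hne : ∀ t, OK t → Qof t ≠ 0 := by
    rintro (i | ⟨i, j⟩) hok h0
    · have hsum : ∑ k, MvPolynomial.C ((fun k => if k = i then (1:ℤ) else 0) k) * P k
          = MvPolynomial.C 0 := by
        rw [← Finset.add_sum_erase _ _ (Finset.mem_univ i)]
        rw [Finset.sum_eq_zero (fun k hk => by
          simp [(Finset.mem_erase.mp hk).1])]
        simpa [hQof] using h0
      have := hP _ ⟨0, hsum⟩ i
      simp at this
    · have hij : i ≠ j := hok
      have hsum : ∑ k, MvPolynomial.C
            ((fun k => if k = i then (1:ℤ) else if k = j then -1 else 0) k) * P k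
          = MvPolynomial.C 0 := by
        rw [← Finset.add_sum_erase _ _ (Finset.mem_univ i),
          ← Finset.add_sum_erase _ _ (Finset.mem_erase.mpr ⟨Ne.symm hij, Finset.mem_univ j⟩)]
        rw [Finset.sum_eq_zero (fun k hk => by
          have hkj : k ≠ j := (Finset.mem_erase.mp hk).1
          have hki : k ≠ i := (Finset.mem_erase.mp (Finset.mem_erase.mp hk).2).1
          simp [hki, hkj])]
        have h0' : P i - P j = 0 := h0
        have hji : j ≠ i := Ne.symm hij
        simp [hji]
        linear_combination h0'
      have := hP _ ⟨0, hsum⟩ i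
      simp at this
  -- global constants
  set D : ℕ := Finset.univ.sup fun t : Fin m ⊕ Fin m × Fin m => (Qof t).totalDegree with hD
  set M : ℕ := Finset.univ.sup
    (fun t : Fin m ⊕ Fin m × Fin m =>
      (Qof t).support.sup fun s => ((Qof t).coeff s).natAbs) with hM
  set K : ℕ := Fintype.card (Fin m ⊕ Fin m × Fin m) with hK
  set E : ℕ := K * D + M + 1 with hE
  refine ⟨((E^2 : ℕ) : ℝ), 1/2, by positivity, by norm_num, ?_⟩
  intro R _ _ _ hchar A
  set q : ℕ := Nat.minFac (ringChar R) with hq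
  have hqE : E^2 < q := by exact_mod_cast hchar
  have hq0 : 0 < q := lt_of_le_of_lt (Nat.zero_le _) hqE
  -- the degenerate set is contained in a union of root sets
  set T : Finset (Fin m ⊕ Fin m × Fin m) := Finset.univ.filter OK with hT
  set S := Finset.univ.filter fun p : R × (Fin n → R) =>
      p.1 ∈ A 0 ∧
      (∀ i : Fin m, p.1 + MvPolynomial.aeval p.2 (P i) ∈ A i.succ) ∧
      (insert p.1 ((Finset.univ : Finset (Fin m)).image
          fun i => p.1 + MvPolynomial.aeval p.2 (P i))).card < m + 1 with hS
  have hsub : S ⊆ T.biUnion fun t =>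
      Finset.univ.filter fun pr : R × (Fin n → R) => MvPolynomial.aeval pr.2 (Qof t) = 0 := by
    intro pr hpr
    rw [hS, Finset.mem_filter] at hpr
    obtain ⟨-, -, -, hdeg⟩ := hpr
    rcases collision_of_card_lt pr.1 (fun i => MvPolynomial.aeval pr.2 (P i)) hdeg with
      ⟨i, hi⟩ | ⟨i, j, hij, hij2⟩
    · refine Finset.mem_biUnion.mpr ⟨Sum.inl i, ?_, ?_⟩
      · simp [hT, hOK]
      · simp only [Finset.mem_filter, Finset.mem_univ, true_and, hQof, Sum.elim_inl]
        exact hi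
    · refine Finset.mem_biUnion.mpr ⟨Sum.inr (i, j), ?_, ?_⟩
      · simp [hT, hOK, hij]
      · simp only [Finset.mem_filter, Finset.mem_univ, true_and, hQof, Sum.elim_inr]
        rw [map_sub, sub_eq_zero]
        exact hij2
  -- counting
  have hroot : ∀ t ∈ T, (Finset.univ.filter fun y : Fin n → R =>
      MvPolynomial.aeval y (Qof t) = 0).card * q ≤ D * Fintype.card R ^ n := by
    intro t ht
    have hok : OK t := (Finset.mem_filter.mp ht).2
    obtain ⟨s, hs⟩ := MvPolynomial.ne_zero_iff.mp (hne t hok)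
    have hsM : ((Qof t).coeff s).natAbs < q := by
      have h1 : ((Qof t).coeff s).natAbs ≤ (Qof t).support.sup
          (fun s => ((Qof t).coeff s).natAbs) :=
        Finset.le_sup (f := fun s => ((Qof t).coeff s).natAbs)
          (MvPolynomial.mem_support_iff.mpr hs)
      have h2 : (Qof t).support.sup (fun s => ((Qof t).coeff s).natAbs) ≤ M :=
        Finset.le_sup (f := fun t => (Qof t).support.sup fun s => ((Qof t).coeff s).natAbs)
          (Finset.mem_univ t)
      have h3 : M < E := by omega
      have h4 : E ≤ E^2 := Nat.le_self_pow two_ne_zero E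
      omega
    calc (Finset.univ.filter fun y : Fin n → R =>
          MvPolynomial.aeval y (Qof t) = 0).card * q
        ≤ (Qof t).totalDegree * Fintype.card R ^ n := root_count_ring n R (Qof t) s hs hsM
      _ ≤ D * Fintype.card R ^ n :=
          Nat.mul_le_mul_right _
            (Finset.le_sup (f := fun t => (Qof t).totalDegree) (Finset.mem_univ t))
  have hprod : ∀ t : Fin m ⊕ Fin m × Fin m,
      (Finset.univ.filter fun pr : R × (Fin n → R) =>
        MvPolynomial.aeval pr.2 (Qof t) = 0).card
      = Fintype.card R * (Finset.univ.filter fun y : Fin n → R =>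
          MvPolynomial.aeval y (Qof t) = 0).card := by
    intro t
    rw [show (Finset.univ.filter fun pr : R × (Fin n → R) =>
        MvPolynomial.aeval pr.2 (Qof t) = 0)
        = Finset.univ ×ˢ (Finset.univ.filter fun y : Fin n → R =>
          MvPolynomial.aeval y (Qof t) = 0) by
      ext pr; simp [Finset.mem_product]]
    rw [Finset.card_product, Finset.card_univ]
  have hnat : S.card * q ≤ (K * D) * Fintype.card R ^ (n + 1) := by
    calc S.card * q
        ≤ (∑ t ∈ T, (Finset.univ.filter fun pr : R × (Fin n → R) =>
            MvPolynomial.aeval pr.2 (Qof t) = 0).card) * q := by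
          exact Nat.mul_le_mul_right _
            ((Finset.card_le_card hsub).trans (Finset.card_biUnion_le))
      _ = ∑ t ∈ T, Fintype.card R * ((Finset.univ.filter fun y : Fin n → R =>
            MvPolynomial.aeval y (Qof t) = 0).card * q) := by
          rw [Finset.sum_mul]
          exact Finset.sum_congr rfl fun t _ => by rw [hprod t]; ring
      _ ≤ ∑ t ∈ T, Fintype.card R * (D * Fintype.card R ^ n) :=
          Finset.sum_le_sum fun t ht => Nat.mul_le_mul_left _ (hroot t ht)
      _ = T.card * (Fintype.card R * (D * Fintype.card R ^ n)) := by
          rw [Finset.sum_const, smul_eq_mul]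
      _ ≤ K * (Fintype.card R * (D * Fintype.card R ^ n)) := by
          refine Nat.mul_le_mul_right _ ?_
          rw [hK, ← Finset.card_univ]
          exact Finset.card_filter_le _ _
      _ = (K * D) * Fintype.card R ^ (n + 1) := by ring
  -- pass to the reals
  have hqr : (0:ℝ) < (q:ℝ) := by exact_mod_cast hq0
  set X : ℝ := (Fintype.card R : ℝ) ^ (n + 1) with hX
  have hX0 : 0 ≤ X := by positivity
  have ha2 : ((K*D : ℕ) : ℝ)^2 ≤ (q:ℝ) := by
    have h1 : (K*D)^2 ≤ E^2 := Nat.pow_le_pow_left (by omega) 2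
    have : ((K*D)^2 : ℕ) ≤ (q:ℕ) := le_of_lt (lt_of_le_of_lt h1 hqE)
    exact_mod_cast this
  have hsq : ((K*D : ℕ) : ℝ) ≤ Real.sqrt (q:ℝ) := by
    rw [show ((K*D:ℕ):ℝ) = Real.sqrt (((K*D:ℕ):ℝ)^2) by
      rw [Real.sqrt_sq (by positivity)]]
    exact Real.sqrt_le_sqrt ha2
  have hs0 : Real.sqrt (q:ℝ) ≠ 0 := by
    refine ne_of_gt (Real.sqrt_pos.mpr hqr)
  calc (S.card : ℝ)
      ≤ ((K*D : ℕ):ℝ) * X / (q:ℝ) := by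
        rw [le_div_iff₀ hqr]
        calc (S.card : ℝ) * (q:ℝ) = ((S.card * q : ℕ) : ℝ) := by push_cast; ring
          _ ≤ (((K * D) * Fintype.card R ^ (n + 1) : ℕ) : ℝ) := by exact_mod_cast hnat
          _ = ((K*D:ℕ):ℝ) * X := by push_cast [hX]; ring
    _ ≤ Real.sqrt (q:ℝ) * X / (q:ℝ) := by gcongr
    _ = X * ((q:ℝ)) ^ (-(1/2 : ℝ)) := by
        rw [Real.rpow_neg hqr.le, ← Real.sqrt_eq_rpow, div_eq_iff (ne_of_gt hqr)]
        have hss : Real.sqrt (q:ℝ) * Real.sqrt (q:ℝ) = (q:ℝ) := Real.mul_self_sqrt hqr.le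
        field_simp
        linear_combination X * hss
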